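/- For a closed spherical convex body W in S^{n+1} (a closed, hemispherical, spherically convex set with nonempty interior), W equals its spherical polar set W° if and only if W has constant width π/2. -/

import Mathlib

open scoped RealInnerProductSpace BigOperators
open Real

namespace Sph

/-- Ambient Euclidean space `ℝ^{n+2}` containing the sphere `S^{n+1}`. -/
abbrev E (n : ℕ) := EuclideanSpace ℝ (Fin (n + 2))

/-- The unit sphere `S^{n+1} ⊂ ℝ^{n+2}`. -/
def sph (n : ℕ) : Set (E n) := {x | ‖x‖ = 1}

/-- The closed hemisphere `H(P)` centered at `P`. -/
def hemi {n : ℕ} (P : E n) : Set (E n) := {Q | ‖Q‖ = 1 ∧ 0 ≤ ⟪P, Q⟫}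

/-- The boundary `∂H(P)` of the hemisphere centered at `P`. -/
def hemiBdry {n : ℕ} (P : E n) : Set (E n) := {Q | ‖Q‖ = 1 ∧ ⟪P, Q⟫ = 0}

/-- Geodesic (angular) distance on the unit sphere. -/
noncomputable def gdist {n : ℕ} (P Q : E n) : ℝ := Real.arccos ⟪P, Q⟫

/-- Radial normalization of a vector. -/
noncomputable def nmz {n : ℕ} (x : E n) : E n := ‖x‖⁻¹ • x

/-- The geodesic arc joining `P` and `Q`. -/
noncomputable def arc {n : ℕ} (P Q : E n) : Set (E n) :=
  {X | ∃ t ∈ Set.Icc (0 : ℝ) 1, X = nmz ((1 - t) • P + t • Q)}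

/-- A subset of the sphere is hemispherical if it misses some closed hemisphere. -/
def Hemispherical {n : ℕ} (W : Set (E n)) : Prop := ∃ P ∈ sph n, W ∩ hemi P = ∅

/-- Spherical convexity: a subset of the sphere closed under geodesic arcs. -/
noncomputable def SphConvex {n : ℕ} (W : Set (E n)) : Prop :=
  W ⊆ sph n ∧ ∀ P ∈ W, ∀ Q ∈ W, arc P Q ⊆ W

/-- Interior of `W` relative to the sphere. -/
def sphInterior {n : ℕ} (W : Set (E n)) : Set (E n) :=
  {X | X ∈ W ∧ ∃ U : Set (E n), IsOpen U ∧ X ∈ U ∧ U ∩ sph n ⊆ W}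

/-- Frontier of `W` relative to the sphere. -/
def sphFrontier {n : ℕ} (W : Set (E n)) : Set (E n) :=
  closure W ∩ closure (sph n \ W)

/-- A spherical convex body: closed, hemispherical, spherically convex,
with an interior point. -/
noncomputable def SphConvexBody {n : ℕ} (W : Set (E n)) : Prop :=
  IsClosed W ∧ Hemispherical W ∧ SphConvex W ∧ (sphInterior W).Nonempty

/-- The hemisphere `H(P)` supports `W`. -/
noncomputable def Supports {n : ℕ} (W : Set (E n)) (P : E n) : Prop :=
  P ∈ sph n ∧ W ⊆ hemi P ∧ (sphFrontier W ∩ hemiBdry P).Nonempty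

/-- The width of `W` determined by the supporting hemisphere `H(P)`:
the minimum thickness `π - |PQ|` of lunes `H(P) ∩ H(Q)` over supporting
hemispheres `H(Q)` (so that `W ⊆ H(P) ∩ H(Q)`). -/
noncomputable def widthAt {n : ℕ} (W : Set (E n)) (P : E n) : ℝ :=
  sInf {d | ∃ Q, Supports W Q ∧ d = π - gdist P Q}

/-- `W` is of constant width `ρ`. -/
noncomputable def ConstWidth {n : ℕ} (W : Set (E n)) (ρ : ℝ) : Prop :=
  ∀ P, Supports W P → widthAt W P = ρ

/-- The spherical polar set `W° = ⋂_{P ∈ W} H(P)` (as a subset of the sphere). -/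
def polar {n : ℕ} (W : Set (E n)) : Set (E n) :=
  {Q | ‖Q‖ = 1 ∧ ∀ P ∈ W, 0 ≤ ⟪P, Q⟫}

/-- The diameter of `W`: the supremum of geodesic distances between its points. -/
noncomputable def diam {n : ℕ} (W : Set (E n)) : ℝ :=
  sSup {d | ∃ P ∈ W, ∃ Q ∈ W, d = gdist P Q}

/-- The spherical convex hull: normalized nonnegative convex combinations. -/
noncomputable def sconv {n : ℕ} (W : Set (E n)) : Set (E n) :=
  {X | ∃ (k : ℕ) (t : Fin k → ℝ) (f : Fin k → E n), (∀ i, f i ∈ W) ∧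
    (∀ i, 0 ≤ t i) ∧ (∑ i, t i) = 1 ∧ X = nmz (∑ i, t i • f i)}

/-- Embedding `x ↦ (x, 1)` of `ℝ^{n+1}` into `ℝ^{n+2}`. -/
noncomputable def lift {n : ℕ} (x : EuclideanSpace ℝ (Fin (n + 1))) : E n :=
  (WithLp.equiv 2 (Fin (n + 2) → ℝ)).symm (Fin.snoc (fun i => x i) 1)

/-- The north pole `N = (0, …, 0, 1)`. -/
noncomputable def north (n : ℕ) : E n := EuclideanSpace.single (Fin.last (n + 1)) 1

end Sph

open Sph
namespace SelfPolarAux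

variable {n : ℕ}

lemma norm_eq_one_of_sq {y : E n} (h : ‖y‖ ^ 2 = 1) : ‖y‖ = 1 := by
  have h1 : ‖y‖ = Real.sqrt (‖y‖ ^ 2) := (Real.sqrt_sq (norm_nonneg y)).symm
  rw [h, Real.sqrt_one] at h1
  exact h1

lemma inner_unit_le_one {P Q : E n} (hP : ‖P‖ = 1) (hQ : ‖Q‖ = 1) : ⟪P, Q⟫ ≤ 1 := by
  have h := real_inner_le_norm P Q
  rw [hP, hQ] at h; linarith

lemma neg_one_le_inner_unit {P Q : E n} (hP : ‖P‖ = 1) (hQ : ‖Q‖ = 1) : -1 ≤ ⟪P, Q⟫ := by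
  have h := abs_real_inner_le_norm P Q
  rw [hP, hQ] at h
  have := abs_le.mp (by linarith [abs_nonneg (⟪P, Q⟫ : ℝ)] : |(⟪P, Q⟫ : ℝ)| ≤ 1)
  exact this.1

lemma inner_self_unit {P : E n} (hP : ‖P‖ = 1) : ⟪P, P⟫ = (1 : ℝ) := by
  rw [real_inner_self_eq_norm_sq, hP]; norm_num

/-- norm of an orthonormal combination -/
lemma norm_ortho_combo {w P : E n} (hw : ‖w‖ = 1) (hP : ‖P‖ = 1)
    (horth : ⟪P, w⟫ = 0) (a b : ℝ) (hab : a ^ 2 + b ^ 2 = 1) :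
    ‖a • w + b • P‖ = 1 := by
  apply norm_eq_one_of_sq
  have hwP : (inner ℝ w P : ℝ) = 0 := by rw [real_inner_comm]; exact horth
  rw [norm_add_sq_real, real_inner_smul_left, real_inner_smul_right, hwP]
  simp only [norm_smul, Real.norm_eq_abs, hw, hP, mul_one, sq_abs]
  linarith

/-- a touching point of a supporting hemisphere lies on the spherical frontier -/
lemma frontier_of_touch {W : Set (E n)} {P w : E n} (hP : ‖P‖ = 1) (hw1 : ‖w‖ = 1)
    (horth : ⟪P, w⟫ = 0) (hwW : w ∈ W) (hsupp : ∀ u ∈ W, 0 ≤ ⟪P, u⟫) :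
    w ∈ sphFrontier W := by
  constructor
  · exact subset_closure hwW
  · rw [Metric.mem_closure_iff]
    intro ε hε
    set t := min (ε / 2) 1 with htdef
    have ht0 : 0 < t := lt_min (by linarith) one_pos
    have ht1 : t ≤ 1 := min_le_right _ _
    have htε : t ≤ ε / 2 := min_le_left _ _
    refine ⟨Real.cos t • w + (-Real.sin t) • P, ⟨?_, ?_⟩, ?_⟩
    · show ‖_‖ = 1
      apply norm_ortho_combo hw1 hP horth
      rw [neg_pow]
      simp [Real.sin_sq_add_cos_sq]
    · -- not in W
      intro hmem
      have h1 := hsupp _ hmem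
      rw [inner_add_right, real_inner_smul_right, real_inner_smul_right, horth,
        inner_self_unit hP] at h1
      have hsin : 0 < Real.sin t := Real.sin_pos_of_pos_of_lt_pi ht0
        (lt_of_le_of_lt ht1 (by linarith [Real.pi_gt_three]))
      simp at h1
      linarith
    · -- distance
      rw [dist_eq_norm, norm_sub_rev]
      have heq : Real.cos t • w + (-Real.sin t) • P - w
          = (Real.cos t - 1) • w + (-Real.sin t) • P := by
        rw [sub_smul, one_smul]; abel
      rw [heq]
      have hb : ‖(Real.cos t - 1) • w + (-Real.sin t) • P‖
          ≤ ‖(Real.cos t - 1) • w‖ + ‖(-Real.sin t) • P‖ := norm_add_le _ _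
      rw [norm_smul, norm_smul, hw1, hP, mul_one, mul_one] at hb
      have hcos : |Real.cos t - 1| ≤ t ^ 2 / 2 := by
        rw [abs_sub_comm, abs_of_nonneg (by linarith [Real.cos_le_one t])]
        have := Real.one_sub_sq_div_two_le_cos (x := t)
        linarith
      have hsin : |(-Real.sin t : ℝ)| ≤ t := by
        rw [abs_neg, abs_of_nonneg (Real.sin_nonneg_of_nonneg_of_le_pi ht0.le
          (le_trans ht1 (by linarith [Real.pi_gt_three])))]
        exact Real.sin_le ht0.le
      have ht2 : t ^ 2 / 2 ≤ t / 2 := by nlinarith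
      calc ‖(Real.cos t - 1) • w + (-Real.sin t) • P‖
          ≤ |Real.cos t - 1| + |(-Real.sin t : ℝ)| := hb
        _ ≤ t / 2 + t := by linarith
        _ < ε := by
            have : t ≤ ε / 2 := htε
            linarith

lemma supports_of_touch {W : Set (E n)} (hsub : W ⊆ sph n) {P w : E n} (hP : ‖P‖ = 1)
    (hwW : w ∈ W) (horth : ⟪P, w⟫ = 0) (hsupp : ∀ u ∈ W, 0 ≤ ⟪P, u⟫) : Supports W P :=
  ⟨hP, fun u hu => ⟨hsub hu, hsupp u hu⟩,
    ⟨w, frontier_of_touch hP (hsub hwW) horth hwW hsupp, hsub hwW, horth⟩⟩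

end SelfPolarAux

namespace SelfPolarAux

variable {n : ℕ}

/-- The cone over `W`. -/
def cone (W : Set (E n)) : Set (E n) := {c | ∃ r : ℝ, 0 ≤ r ∧ ∃ w ∈ W, c = r • w}

lemma cone_zero {W : Set (E n)} (hne : W.Nonempty) : (0 : E n) ∈ cone W := by
  obtain ⟨w, hw⟩ := hne
  exact ⟨0, le_refl _, w, hw, (zero_smul ℝ w).symm⟩

lemma mem_cone_self {W : Set (E n)} {w : E n} (hw : w ∈ W) : w ∈ cone W :=
  ⟨1, zero_le_one, w, hw, (one_smul ℝ w).symm⟩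

lemma isCompact_W {W : Set (E n)} (hcl : IsClosed W) (hsub : W ⊆ sph n) : IsCompact W := by
  apply Metric.isCompact_of_isClosed_isBounded hcl
  apply (Metric.isBounded_closedBall (x := (0 : E n)) (r := 1)).subset
  intro w hw
  simp [Metric.mem_closedBall, dist_eq_norm, le_of_eq (hsub hw)]

lemma cone_convex {W : Set (E n)}
    (harc : ∀ P ∈ W, ∀ Q ∈ W, arc P Q ⊆ W) {R : E n}
    (hRW : ∀ w ∈ W, ⟪R, w⟫ < 0) : Convex ℝ (cone W) := by
  rintro c₁ ⟨r₁, hr₁, w₁, hw₁, rfl⟩ c₂ ⟨r₂, hr₂, w₂, hw₂, rfl⟩ a b ha hb hab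
  rw [smul_smul, smul_smul]
  set s₁ := a * r₁ with hs₁def
  set s₂ := b * r₂ with hs₂def
  have hs₁ : 0 ≤ s₁ := mul_nonneg ha hr₁
  have hs₂ : 0 ≤ s₂ := mul_nonneg hb hr₂
  rcases eq_or_lt_of_le hs₁ with h1 | h1
  · rw [← h1, zero_smul, zero_add]; exact ⟨s₂, hs₂, w₂, hw₂, rfl⟩
  rcases eq_or_lt_of_le hs₂ with h2 | h2
  · rw [← h2, zero_smul, add_zero]; exact ⟨s₁, hs₁, w₁, hw₁, rfl⟩
  · have hssum : 0 < s₁ + s₂ := by linarith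
    set t : ℝ := s₂ / (s₁ + s₂) with htdef
    have ht0 : 0 ≤ t := div_nonneg hs₂ hssum.le
    have ht1 : t ≤ 1 := by rw [div_le_one hssum]; linarith
    set u : E n := (1 - t) • w₁ + t • w₂ with hudef
    have huW : nmz u ∈ W := harc w₁ hw₁ w₂ hw₂ ⟨t, ⟨ht0, ht1⟩, rfl⟩
    have hRu : ⟪R, u⟫ < 0 := by
      rw [hudef, inner_add_right, real_inner_smul_right, real_inner_smul_right]
      have ha1 := hRW w₁ hw₁; have ha2 := hRW w₂ hw₂
      rcases le_or_gt t (1/2) with hhalf | hhalf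
      · nlinarith
      · nlinarith
    have hu0 : u ≠ 0 := by
      intro h; rw [h, inner_zero_right] at hRu; exact lt_irrefl 0 hRu
    have hnu : 0 < ‖u‖ := norm_pos_iff.mpr hu0
    refine ⟨(s₁ + s₂) * ‖u‖, by positivity, nmz u, huW, ?_⟩
    show s₁ • w₁ + s₂ • w₂ = ((s₁ + s₂) * ‖u‖) • (‖u‖⁻¹ • u)
    rw [smul_smul, mul_assoc, mul_inv_cancel₀ hnu.ne', mul_one]
    rw [hudef, smul_add, smul_smul, smul_smul]
    have e1 : (s₁ + s₂) * (1 - t) = s₁ := by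
      rw [htdef]; field_simp; ring
    have e2 : (s₁ + s₂) * t = s₂ := by
      rw [htdef]; field_simp
    rw [e1, e2]

lemma cone_closed {W : Set (E n)} (hcl : IsClosed W) (hsub : W ⊆ sph n)
    (hne : W.Nonempty) : IsClosed (cone W) := by
  apply IsSeqClosed.isClosed
  intro f c hf hlim
  choose r hr w hw hfeq using hf
  have hnorm : ∀ k, ‖f k‖ = r k := by
    intro k
    rw [hfeq k, norm_smul, hsub (hw k), mul_one, Real.norm_eq_abs, abs_of_nonneg (hr k)]
  have hrlim : Filter.Tendsto r Filter.atTop (nhds ‖c‖) :=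
    (hlim.norm).congr (fun k => hnorm k)
  rcases eq_or_ne ‖c‖ 0 with hc | hc
  · rw [norm_eq_zero] at hc; rw [hc]; exact cone_zero hne
  · have hcpos : 0 < ‖c‖ := lt_of_le_of_ne (norm_nonneg c) (Ne.symm hc)
    have htend : Filter.Tendsto (fun k => (r k)⁻¹ • f k) Filter.atTop (nhds (‖c‖⁻¹ • c)) :=
      (hrlim.inv₀ hc).smul hlim
    have hev : ∀ᶠ k in Filter.atTop, (r k)⁻¹ • f k ∈ W := by
      have hgt : ∀ᶠ k in Filter.atTop, 0 < r k := hrlim.eventually (eventually_gt_nhds hcpos)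
      filter_upwards [hgt] with k hk
      rw [hfeq k, smul_smul, inv_mul_cancel₀ hk.ne', one_smul]
      exact hw k
    have hmem : ‖c‖⁻¹ • c ∈ W := hcl.mem_of_tendsto htend hev
    exact ⟨‖c‖, norm_nonneg c, ‖c‖⁻¹ • c, hmem, (smul_inv_smul₀ hc c).symm⟩

end SelfPolarAux

namespace SelfPolarAux

variable {n : ℕ}

/-- Separation: a unit vector outside `W` is strictly separated by some supporting hemisphere. -/
lemma sep {W : Set (E n)} (hcl : IsClosed W) (hsub : W ⊆ sph n)
    (harc : ∀ P ∈ W, ∀ Q ∈ W, arc P Q ⊆ W) {R : E n}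
    (hRW : ∀ w ∈ W, ⟪R, w⟫ < 0) {x : E n} (hx1 : ‖x‖ = 1) (hxW : x ∉ W)
    {w₂ : E n} (hw₂ : w₂ ∈ W) (hw₂x : w₂ ≠ -x) :
    ∃ P, Supports W P ∧ ⟪P, x⟫ < 0 := by
  have hne : W.Nonempty := ⟨w₂, hw₂⟩
  have hcomp := isCompact_W hcl hsub
  have hxC : x ∉ cone W := by
    rintro ⟨r, hr, w, hw, hxeq⟩
    have hr1 : r = 1 := by
      have h2 : ‖x‖ = r := by
        rw [hxeq, norm_smul, hsub hw, mul_one, Real.norm_eq_abs, abs_of_nonneg hr]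
      rw [hx1] at h2; exact h2.symm
    rw [hr1, one_smul] at hxeq
    exact hxW (hxeq ▸ hw)
  obtain ⟨f, u, hfu, hux⟩ := geometric_hahn_banach_closed_point
    (cone_convex harc hRW) (cone_closed hcl hsub hne) hxC
  have hu0 : 0 < u := by
    have h := hfu 0 (cone_zero hne)
    simpa using h
  have hfW : ∀ w ∈ W, f w ≤ 0 := by
    intro w hw
    by_contra hpos
    push_neg at hpos
    have hmem : ((u + 1) / f w) • w ∈ cone W :=
      ⟨(u + 1) / f w, by positivity, w, hw, rfl⟩
    have := hfu _ hmem
    rw [map_smul] at this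
    simp only [smul_eq_mul] at this
    rw [div_mul_cancel₀ _ hpos.ne'] at this
    linarith
  set P₀ : E n := -((InnerProductSpace.toDual ℝ (E n)).symm f) with hP₀def
  have hP₀ : ∀ y : E n, ⟪P₀, y⟫ = -(f y) := by
    intro y
    rw [hP₀def, inner_neg_left]
    congr 1
    exact InnerProductSpace.toDual_symm_apply
  have hP₀W : ∀ w ∈ W, 0 ≤ ⟪P₀, w⟫ := fun w hw => by
    rw [hP₀ w]; linarith [hfW w hw]
  have hP₀x : ⟪P₀, x⟫ < 0 := by rw [hP₀ x]; linarith
  -- the sliding direction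
  have hvne1 : ⟪w₂, x⟫ ≠ 1 := by
    intro h
    have : ‖w₂ - x‖ ^ 2 = 0 := by
      rw [norm_sub_sq_real, hsub hw₂, hx1, h]; norm_num
    have : w₂ = x := by
      rw [pow_eq_zero_iff (by norm_num), norm_eq_zero, sub_eq_zero] at this
      exact this
    exact hxW (this ▸ hw₂)
  have hvnen1 : ⟪w₂, x⟫ ≠ -1 := by
    intro h
    have : ‖w₂ + x‖ ^ 2 = 0 := by
      rw [norm_add_sq_real, hsub hw₂, hx1, h]; norm_num
    have : w₂ = -x := by
      rw [pow_eq_zero_iff (by norm_num), norm_eq_zero, add_eq_zero_iff_eq_neg] at this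
      exact this
    exact hw₂x this
  have hκ : 0 < 1 - ⟪w₂, x⟫ ^ 2 := by
    have h1 : ⟪w₂, x⟫ < 1 := lt_of_le_of_ne (inner_unit_le_one (hsub hw₂) hx1) hvne1
    have h2 : -1 < ⟪w₂, x⟫ := lt_of_le_of_ne (neg_one_le_inner_unit (hsub hw₂) hx1) (Ne.symm hvnen1)
    nlinarith
  set d : E n := w₂ - ⟪w₂, x⟫ • x with hddef
  have hdx : ⟪d, x⟫ = 0 := by
    rw [hddef, inner_sub_left, real_inner_smul_left, inner_self_unit hx1]; ring
  have hdw₂ : ⟪d, w₂⟫ = 1 - ⟪w₂, x⟫ ^ 2 := by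
    rw [hddef, inner_sub_left, real_inner_smul_left, real_inner_comm x w₂,
      inner_self_unit (hsub hw₂)]; ring
  set T : Set ℝ := {t | 0 ≤ t ∧ ∀ w ∈ W, 0 ≤ ⟪P₀ - t • d, w⟫} with hTdef
  have h0T : (0 : ℝ) ∈ T := ⟨le_refl 0, fun w hw => by simpa using hP₀W w hw⟩
  have hsubT : ∀ t ∈ T, ∀ w ∈ W, 0 ≤ ⟪P₀, w⟫ - t * ⟪d, w⟫ := by
    intro t ht w hw
    have := ht.2 w hw
    rwa [inner_sub_left, real_inner_smul_left] at this
  have hTb : BddAbove T := by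
    refine ⟨⟪P₀, w₂⟫ / (1 - ⟪w₂, x⟫ ^ 2), fun t ht => ?_⟩
    have h := hsubT t ht w₂ hw₂
    rw [hdw₂] at h
    rw [le_div_iff₀ hκ]
    linarith
  set t₀ := sSup T with ht₀def
  have ht₀0 : 0 ≤ t₀ := le_csSup hTb h0T
  have ht₀T : t₀ ∈ T := by
    refine ⟨ht₀0, fun w hw => ?_⟩
    rw [inner_sub_left, real_inner_smul_left]
    rcases le_or_gt ⟪d, w⟫ 0 with hdw | hdw
    · have h1 := hP₀W w hw
      nlinarith
    · have hub : ∀ t ∈ T, t ≤ ⟪P₀, w⟫ / ⟪d, w⟫ := by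
        intro t ht
        have h := hsubT t ht w hw
        rw [le_div_iff₀ hdw]; linarith
      have hle : t₀ ≤ ⟪P₀, w⟫ / ⟪d, w⟫ := csSup_le ⟨0, h0T⟩ hub
      have h2 := (le_div_iff₀ hdw).mp hle
      linarith
  set uv : E n := P₀ - t₀ • d with huvdef
  obtain ⟨ws, hwsW, hmin'⟩ := hcomp.exists_isMinOn hne
    (Continuous.continuousOn (Continuous.inner continuous_const continuous_id)
      (f := fun w => (⟪uv, w⟫ : ℝ)))
  have hmin : ∀ y ∈ W, ⟪uv, ws⟫ ≤ ⟪uv, y⟫ := fun y hy => hmin' hy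
  have hm0 : 0 ≤ ⟪uv, ws⟫ := ht₀T.2 ws hwsW
  have hm : ⟪uv, ws⟫ = 0 := by
    rcases eq_or_lt_of_le hm0 with h | h
    · exact h.symm
    · exfalso
      set δ := ⟪uv, ws⟫ / (‖d‖ + 1) with hδdef
      have hd1 : (0:ℝ) < ‖d‖ + 1 := by positivity
      have hδ0 : 0 < δ := div_pos h hd1
      have hmemT : t₀ + δ ∈ T := by
        refine ⟨by linarith, fun w hw => ?_⟩
        have heq : P₀ - (t₀ + δ) • d = uv - δ • d := by
          rw [huvdef, add_smul]; abel
        rw [heq, inner_sub_left, real_inner_smul_left]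
        have h1 : ⟪uv, ws⟫ ≤ ⟪uv, w⟫ := hmin w hw
        have h2 : ⟪d, w⟫ ≤ ‖d‖ := by
          have h3 := real_inner_le_norm d w
          rw [hsub hw, mul_one] at h3; exact h3
        have h3 : δ * ⟪d, w⟫ ≤ δ * ‖d‖ := by nlinarith
        have h4 : δ * (‖d‖ + 1) = ⟪uv, ws⟫ := by
          rw [hδdef]; field_simp
        nlinarith
      have := le_csSup hTb hmemT
      linarith
  have huvx : ⟪uv, x⟫ < 0 := by
    rw [huvdef, inner_sub_left, real_inner_smul_left, hdx]
    simpa using hP₀x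
  have huv0 : uv ≠ 0 := by
    intro h; rw [h, inner_zero_left] at huvx; exact lt_irrefl 0 huvx
  have hnuv : 0 < ‖uv‖ := norm_pos_iff.mpr huv0
  set P := ‖uv‖⁻¹ • uv with hPdef
  have hP1 : ‖P‖ = 1 := by
    rw [hPdef, norm_smul, Real.norm_eq_abs, abs_of_nonneg (inv_nonneg.mpr hnuv.le),
      inv_mul_cancel₀ hnuv.ne']
  have hPsupp : ∀ u' ∈ W, 0 ≤ ⟪P, u'⟫ := fun u' hu' => by
    rw [hPdef, real_inner_smul_left]
    exact mul_nonneg (inv_nonneg.mpr hnuv.le) (ht₀T.2 u' hu')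
  refine ⟨P, supports_of_touch hsub hP1 hwsW ?_ hPsupp, ?_⟩
  · rw [hPdef, real_inner_smul_left, hm, mul_zero]
  · rw [hPdef, real_inner_smul_left]
    exact mul_neg_of_pos_of_neg (inv_pos.mpr hnuv) huvx

end SelfPolarAux

namespace SelfPolarAux

variable {n : ℕ}

lemma sphFrontier_isCompact {W : Set (E n)} (hsub : W ⊆ sph n) :
    IsCompact (sphFrontier W) := by
  apply Metric.isCompact_of_isClosed_isBounded (isClosed_closure.inter isClosed_closure)
  apply Bornology.IsBounded.subset _ Set.inter_subset_left
  apply Bornology.IsBounded.closure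
  apply (Metric.isBounded_closedBall (x := (0 : E n)) (r := 1)).subset
  intro w hw
  simp [Metric.mem_closedBall, dist_eq_norm, le_of_eq (hsub hw)]

lemma supports_isClosed {W : Set (E n)} (hsub : W ⊆ sph n) :
    IsClosed {P : E n | Supports W P} := by
  apply IsSeqClosed.isClosed
  intro f P hf hlim
  have hnorm : ‖P‖ = 1 := by
    have h1 : ∀ k, ‖f k‖ = 1 := fun k => (hf k).1
    exact tendsto_nhds_unique (hlim.norm.congr h1) tendsto_const_nhds
  refine ⟨hnorm, fun w hw => ⟨hsub hw, ?_⟩, ?_⟩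
  · have htend : Filter.Tendsto (fun k => (⟪f k, w⟫ : ℝ)) Filter.atTop (nhds ⟪P, w⟫) :=
      hlim.inner tendsto_const_nhds
    exact ge_of_tendsto' htend (fun k => ((hf k).2.1 hw).2)
  · have hx : ∀ k, ∃ x, x ∈ sphFrontier W ∩ hemiBdry (f k) := fun k => (hf k).2.2
    choose xs hxs using hx
    have hK := sphFrontier_isCompact hsub
    obtain ⟨xl, hxlK, φ, hφ, hxtend⟩ := hK.tendsto_subseq (fun k => (hxs k).1)
    refine ⟨xl, hxlK, ?_, ?_⟩
    · have h1 : ∀ k, ‖xs (φ k)‖ = 1 := fun k => (hxs (φ k)).2.1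
      exact tendsto_nhds_unique (hxtend.norm.congr h1) tendsto_const_nhds
    · have htend : Filter.Tendsto (fun k => (⟪f (φ k), xs (φ k)⟫ : ℝ)) Filter.atTop
        (nhds ⟪P, xl⟫) := (hlim.comp (hφ.tendsto_atTop)).inner hxtend
      have h0 : ∀ k, (⟪f (φ k), xs (φ k)⟫ : ℝ) = 0 := fun k => (hxs (φ k)).2.2
      exact (tendsto_nhds_unique (Filter.Tendsto.congr h0 htend) tendsto_const_nhds)

lemma supports_isCompact {W : Set (E n)} (hsub : W ⊆ sph n) :
    IsCompact {P : E n | Supports W P} := by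
  apply Metric.isCompact_of_isClosed_isBounded (supports_isClosed hsub)
  apply (Metric.isBounded_closedBall (x := (0 : E n)) (r := 1)).subset
  intro P hP
  simp [Metric.mem_closedBall, dist_eq_norm, le_of_eq hP.1]

/-- Lower width bound : any two supporting centers make a non-obtuse angle. -/
lemma supports_inner_nonneg {W : Set (E n)} (hCW : ConstWidth W (π / 2)) {P Q : E n}
    (hP : Supports W P) (hQ : Supports W Q) : 0 ≤ ⟪P, Q⟫ := by
  have h := hCW P hP
  unfold widthAt at h
  have hbdd : BddBelow {d | ∃ Q', Supports W Q' ∧ d = π - gdist P Q'} := by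
    refine ⟨0, ?_⟩
    rintro d ⟨Q', _, rfl⟩
    have := Real.arccos_le_pi (⟪P, Q'⟫ : ℝ)
    unfold gdist; linarith
  have hle := csInf_le hbdd ⟨Q, hQ, rfl⟩
  rw [h] at hle
  have : gdist P Q ≤ π / 2 := by linarith
  exact Real.arccos_le_pi_div_two.mp this

/-- Upper width bound + compactness : each supporting center has an orthogonal mate. -/
lemma exists_orth_support {W : Set (E n)} (hsub : W ⊆ sph n) (hCW : ConstWidth W (π / 2))
    {P : E n} (hP : Supports W P) : ∃ Q, Supports W Q ∧ ⟪P, Q⟫ = 0 := by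
  obtain ⟨Q, hQS, hmin'⟩ := (supports_isCompact hsub).exists_isMinOn ⟨P, hP⟩
    (Continuous.continuousOn (Continuous.inner continuous_const continuous_id)
      (f := fun Q => (⟪P, Q⟫ : ℝ)))
  have hmin : ∀ y ∈ {P : E n | Supports W P}, (⟪P, Q⟫ : ℝ) ≤ ⟪P, y⟫ := fun y hy => hmin' hy
  have hm0 : 0 ≤ ⟪P, Q⟫ := supports_inner_nonneg hCW hP hQS
  rcases eq_or_lt_of_le hm0 with h | h
  · exact ⟨Q, hQS, h.symm⟩
  · exfalso
    have h1 := hCW P hP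
    unfold widthAt at h1
    have hlow : ∀ d ∈ {d | ∃ Q', Supports W Q' ∧ d = π - gdist P Q'},
        π - Real.arccos ⟪P, Q⟫ ≤ d := by
      rintro d ⟨Q', hQ', rfl⟩
      have hle : (⟪P, Q⟫ : ℝ) ≤ ⟪P, Q'⟫ := hmin Q' hQ'
      have harc : Real.arccos ⟪P, Q'⟫ ≤ Real.arccos ⟪P, Q⟫ := by
        apply Real.strictAntiOn_arccos.antitoneOn
          ⟨neg_one_le_inner_unit hP.1 hQS.1, inner_unit_le_one hP.1 hQS.1⟩
          ⟨neg_one_le_inner_unit hP.1 hQ'.1, inner_unit_le_one hP.1 hQ'.1⟩ hle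
      unfold gdist; linarith
    have h2 := le_csInf (s := {d | ∃ Q', Supports W Q' ∧ d = π - gdist P Q'})
      ⟨π - gdist P P, ⟨P, hP, rfl⟩⟩ hlow
    rw [h1] at h2
    have h3 : Real.arccos ⟪P, Q⟫ < π / 2 := Real.arccos_lt_pi_div_two.mpr h
    linarith

end SelfPolarAux

namespace SelfPolarAux

variable {n : ℕ}

lemma exists_unit_orthogonal (z : E n) (hz : z ≠ 0) :
    ∃ e : E n, ‖e‖ = 1 ∧ ⟪z, e⟫ = 0 := by
  have hne : ((ℝ ∙ z)ᗮ : Submodule ℝ (E n)) ≠ ⊥ := by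
    intro h
    have htop : (ℝ ∙ z : Submodule ℝ (E n)) = ⊤ := Submodule.orthogonal_eq_bot_iff.mp h
    have h1 : Module.finrank ℝ (ℝ ∙ z : Submodule ℝ (E n)) = 1 := finrank_span_singleton hz
    rw [htop, finrank_top] at h1
    have h2 : Module.finrank ℝ (E n) = n + 2 := finrank_euclideanSpace_fin
    omega
  obtain ⟨v, hv, hv0⟩ := (Submodule.ne_bot_iff _).mp hne
  have hnv : 0 < ‖v‖ := norm_pos_iff.mpr hv0
  refine ⟨‖v‖⁻¹ • v, ?_, ?_⟩
  · rw [norm_smul, Real.norm_eq_abs, abs_of_nonneg (inv_nonneg.mpr hnv.le),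
      inv_mul_cancel₀ hnv.ne']
  · have h3 : (⟪z, v⟫ : ℝ) = 0 :=
      (Submodule.mem_orthogonal (ℝ ∙ z) v).mp hv z (Submodule.mem_span_singleton_self z)
    rw [real_inner_smul_right, h3, mul_zero]

lemma exists_ne_neg {W : Set (E n)} (hsub : W ⊆ sph n)
    (hint : (sphInterior W).Nonempty) (x : E n) :
    ∃ w₂ ∈ W, w₂ ≠ -x := by
  obtain ⟨z, hzW, U, hU, hzU, hUW⟩ := hint
  rcases ne_or_eq z (-x) with hz | hz
  · exact ⟨z, hzW, hz⟩
  · have hz1 : ‖z‖ = 1 := hsub hzW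
    have hz0 : z ≠ 0 := by intro h; rw [h, norm_zero] at hz1; norm_num at hz1
    obtain ⟨e, he1, hez⟩ := exists_unit_orthogonal z hz0
    obtain ⟨ε, hε, hball⟩ := Metric.isOpen_iff.mp hU z hzU
    set t := min (ε / 2) 1 with htdef
    have ht0 : 0 < t := lt_min (by linarith) one_pos
    have ht1 : t ≤ 1 := min_le_right _ _
    have htπ : t < π := lt_of_le_of_lt ht1 (by linarith [Real.pi_gt_three])
    set y := Real.cos t • z + Real.sin t • e with hydef
    have hy1 : ‖y‖ = 1 := by
      rw [hydef]
      exact norm_ortho_combo hz1 he1 (by rw [real_inner_comm]; exact hez) _ _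
        (by rw [add_comm]; exact Real.sin_sq_add_cos_sq t)
    have hyU : y ∈ U := by
      apply hball
      rw [Metric.mem_ball, dist_eq_norm]
      have heq : y - z = (Real.cos t - 1) • z + Real.sin t • e := by
        rw [hydef, sub_smul, one_smul]; abel
      rw [heq]
      have hb := norm_add_le ((Real.cos t - 1) • z) (Real.sin t • e)
      rw [norm_smul, norm_smul, hz1, he1, mul_one, mul_one] at hb
      have hcos : |Real.cos t - 1| ≤ t ^ 2 / 2 := by
        rw [abs_sub_comm, abs_of_nonneg (by linarith [Real.cos_le_one t])]
        linarith [Real.one_sub_sq_div_two_le_cos (x := t)]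
      have hsin : |Real.sin t| ≤ t := by
        rw [abs_of_nonneg (Real.sin_nonneg_of_nonneg_of_le_pi ht0.le htπ.le)]
        exact Real.sin_le ht0.le
      have ht2 : t ^ 2 / 2 ≤ t / 2 := by nlinarith
      have htε : t ≤ ε / 2 := min_le_left _ _
      calc ‖(Real.cos t - 1) • z + Real.sin t • e‖
          ≤ |Real.cos t - 1| + |Real.sin t| := hb
        _ < ε := by linarith
    have hyW : y ∈ W := hUW ⟨hyU, hy1⟩
    refine ⟨y, hyW, ?_⟩
    rw [← hz]
    intro h
    have h2 : (⟪e, y⟫ : ℝ) = ⟪e, z⟫ := by rw [h]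
    have hez' : (⟪e, z⟫ : ℝ) = 0 := by rw [real_inner_comm]; exact hez
    rw [hydef, inner_add_right, real_inner_smul_right, real_inner_smul_right,
      inner_self_unit he1, hez'] at h2
    have hsinpos : 0 < Real.sin t := Real.sin_pos_of_pos_of_lt_pi ht0 htπ
    rw [mul_zero, mul_one, zero_add] at h2
    linarith

end SelfPolarAux

namespace SelfPolarAux

variable {n : ℕ}

/-- every supporting center lies in `W` (constant width `π/2`). -/
lemma supports_mem {W : Set (E n)} (hcl : IsClosed W) (hsub : W ⊆ sph n)
    (harc : ∀ P ∈ W, ∀ Q ∈ W, arc P Q ⊆ W) {R : E n}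
    (hRW : ∀ w ∈ W, ⟪R, w⟫ < 0) (hint : (sphInterior W).Nonempty)
    (hCW : ConstWidth W (π / 2)) {P : E n} (hP : Supports W P) : P ∈ W := by
  by_contra hPW
  obtain ⟨w₂, hw₂, hw₂x⟩ := exists_ne_neg hsub hint P
  obtain ⟨P', hP', hneg⟩ := sep hcl hsub harc hRW hP.1 hPW hw₂ hw₂x
  exact absurd (supports_inner_nonneg hCW hP' hP) (not_le.mpr hneg)

lemma polar_subset_W {W : Set (E n)} (hcl : IsClosed W) (hsub : W ⊆ sph n)
    (harc : ∀ P ∈ W, ∀ Q ∈ W, arc P Q ⊆ W) {R : E n}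
    (hRW : ∀ w ∈ W, ⟪R, w⟫ < 0) (hint : (sphInterior W).Nonempty)
    (hCW : ConstWidth W (π / 2)) : polar W ⊆ W := by
  intro q hq
  by_contra hqW
  obtain ⟨w₂, hw₂, hw₂x⟩ := exists_ne_neg hsub hint q
  obtain ⟨P, hP, hneg⟩ := sep hcl hsub harc hRW hq.1 hqW hw₂ hw₂x
  have hPW : P ∈ W := supports_mem hcl hsub harc hRW hint hCW hP
  exact absurd (hq.2 P hPW) (not_le.mpr hneg)

/-- The dual cone of `W`. -/
def dcone (W : Set (E n)) : Set (E n) := {v | ∀ w ∈ W, 0 ≤ ⟪v, w⟫}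

lemma dcone_closed {W : Set (E n)} : IsClosed (dcone W) := by
  have h : dcone W = ⋂ w ∈ W, {v : E n | 0 ≤ ⟪v, w⟫} := by
    ext v; simp [dcone]
  rw [h]
  exact isClosed_biInter fun w _ =>
    isClosed_le continuous_const (Continuous.inner continuous_id continuous_const)

lemma dcone_subset_cone {W : Set (E n)} (hcl : IsClosed W) (hsub : W ⊆ sph n)
    (harc : ∀ P ∈ W, ∀ Q ∈ W, arc P Q ⊆ W) {R : E n}
    (hRW : ∀ w ∈ W, ⟪R, w⟫ < 0) (hint : (sphInterior W).Nonempty)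
    (hCW : ConstWidth W (π / 2)) : dcone W ⊆ cone W := by
  have hne : W.Nonempty := by
    obtain ⟨z, hzW, _⟩ := hint; exact ⟨z, hzW⟩
  intro v hv
  rcases eq_or_ne v 0 with rfl | hv0
  · exact cone_zero hne
  · have hnv : 0 < ‖v‖ := norm_pos_iff.mpr hv0
    have hpolar : ‖v‖⁻¹ • v ∈ polar W := by
      refine ⟨?_, fun Pw hPw => ?_⟩
      · rw [norm_smul, Real.norm_eq_abs, abs_of_nonneg (inv_nonneg.mpr hnv.le),
          inv_mul_cancel₀ hnv.ne']
      · rw [real_inner_smul_right]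
        refine mul_nonneg (inv_nonneg.mpr hnv.le) ?_
        rw [real_inner_comm]; exact hv Pw hPw
    have hmem : ‖v‖⁻¹ • v ∈ W := polar_subset_W hcl hsub harc hRW hint hCW hpolar
    exact ⟨‖v‖, norm_nonneg v, _, hmem, (smul_inv_smul₀ hnv.ne' v).symm⟩

lemma neg_R_interior {W : Set (E n)} (hcl : IsClosed W) (hsub : W ⊆ sph n)
    {R : E n} (hRW : ∀ w ∈ W, ⟪R, w⟫ < 0) (hne : W.Nonempty) :
    -R ∈ interior (dcone W) := by
  obtain ⟨ws, hws, hmin'⟩ := (isCompact_W hcl hsub).exists_isMinOn hne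
    (Continuous.continuousOn (Continuous.inner continuous_const continuous_id)
      (f := fun w => (⟪-R, w⟫ : ℝ)))
  have hmin : ∀ y ∈ W, (⟪-R, ws⟫ : ℝ) ≤ ⟪-R, y⟫ := fun y hy => hmin' hy
  set m := (⟪-R, ws⟫ : ℝ) with hmdef
  have hm : 0 < m := by
    rw [hmdef, inner_neg_left]
    linarith [hRW ws hws]
  rw [mem_interior]
  refine ⟨Metric.ball (-R) m, ?_, Metric.isOpen_ball, Metric.mem_ball_self hm⟩
  intro v hvb w hw
  have hsplit : (⟪v, w⟫ : ℝ) = ⟪-R, w⟫ + ⟪v + R, w⟫ := by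
    rw [← inner_add_left]
    exact congrArg (fun z : E n => (⟪z, w⟫ : ℝ)) (by abel : v = -R + (v + R))
  have hdist : ‖v + R‖ < m := by
    have := Metric.mem_ball.mp hvb
    rwa [dist_eq_norm, sub_neg_eq_add] at this
  have habs : |(⟪v + R, w⟫ : ℝ)| ≤ ‖v + R‖ := by
    have h := abs_real_inner_le_norm (v + R) w
    rwa [hsub hw, mul_one] at h
  have h1 : m ≤ ⟪-R, w⟫ := hmin w hw
  have h2 := abs_le.mp habs
  rw [hsplit]
  linarith

lemma frontier_dcone_not_interior {W : Set (E n)} (hcl : IsClosed W) (hsub : W ⊆ sph n)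
    (harc : ∀ P ∈ W, ∀ Q ∈ W, arc P Q ⊆ W) {R : E n}
    (hRW : ∀ w ∈ W, ⟪R, w⟫ < 0) (hint : (sphInterior W).Nonempty)
    (hCW : ConstWidth W (π / 2)) :
    ∀ v ∈ frontier (dcone W), v ∉ interior (cone W) := by
  have hne : W.Nonempty := by
    obtain ⟨z, hzW, _⟩ := hint; exact ⟨z, hzW⟩
  intro v hvf hvint
  rw [dcone_closed.frontier_eq] at hvf
  obtain ⟨hvCs, hvnint⟩ := hvf
  obtain ⟨ε, hε, hball⟩ := Metric.isOpen_iff.mp isOpen_interior v hvint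
  rcases eq_or_ne v 0 with rfl | hv0
  · -- 0 cannot be interior to the cone
    obtain ⟨w1, hw1⟩ := hne
    have hmem : (ε/2) • (-w1) ∈ cone W := by
      apply interior_subset
      apply hball
      rw [Metric.mem_ball, dist_eq_norm, sub_zero, norm_smul, norm_neg, hsub hw1,
        mul_one, Real.norm_eq_abs, abs_of_nonneg (by linarith)]
      linarith
    obtain ⟨r, hr, w, hw, heq⟩ := hmem
    have hrval : r = ε/2 := by
      have h1 : ‖(ε/2) • (-w1)‖ = ε/2 := by
        rw [norm_smul, norm_neg, hsub hw1, mul_one, Real.norm_eq_abs,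
          abs_of_nonneg (by linarith)]
      have h2 : ‖r • w‖ = r := by
        rw [norm_smul, hsub hw, mul_one, Real.norm_eq_abs, abs_of_nonneg hr]
      rw [heq, h2] at h1; exact h1
    have hweq : w = -w1 := by
      have h3 : (ε/2)⁻¹ • ((ε/2 : ℝ) • (-w1)) = (ε/2)⁻¹ • (r • w) := by rw [heq]
      rw [hrval] at h3
      rw [inv_smul_smul₀ (by positivity : (ε/2:ℝ) ≠ 0) (-w1),
        inv_smul_smul₀ (by positivity : (ε/2:ℝ) ≠ 0) w] at h3
      exact h3.symm
    have hA := hRW w1 hw1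
    have hB := hRW w hw
    rw [hweq, inner_neg_right] at hB
    linarith
  · -- v ≠ 0 : find touching point, use orthogonal mate
    have hnv : 0 < ‖v‖ := norm_pos_iff.mpr hv0
    obtain ⟨ws, hws, hmin'⟩ := (isCompact_W hcl hsub).exists_isMinOn hne
      (Continuous.continuousOn (Continuous.inner continuous_const continuous_id)
        (f := fun w => (⟪v, w⟫ : ℝ)))
    have hmin : ∀ y ∈ W, (⟪v, ws⟫ : ℝ) ≤ ⟪v, y⟫ := fun y hy => hmin' hy
    have hm0 : 0 ≤ ⟪v, ws⟫ := hvCs ws hws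
    have hm : (⟪v, ws⟫ : ℝ) = 0 := by
      rcases eq_or_lt_of_le hm0 with h | h
      · exact h.symm
      · exfalso
        apply hvnint
        rw [mem_interior]
        refine ⟨Metric.ball v ⟪v, ws⟫, ?_, Metric.isOpen_ball, Metric.mem_ball_self h⟩
        intro u hub w hw
        have huv : v + (u - v) = u := by abel
        have hsplit : (⟪u, w⟫ : ℝ) = ⟪v, w⟫ + ⟪u - v, w⟫ := by
          rw [← inner_add_left]
          exact congrArg (fun z : E n => (⟪z, w⟫ : ℝ)) huv.symm
        have hdist : ‖u - v‖ < ⟪v, ws⟫ := by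
          have := Metric.mem_ball.mp hub
          rwa [dist_eq_norm] at this
        have habs : |(⟪u - v, w⟫ : ℝ)| ≤ ‖u - v‖ := by
          have h2 := abs_real_inner_le_norm (u - v) w
          rwa [hsub hw, mul_one] at h2
        have h3 := abs_le.mp habs
        have h4 := hmin w hw
        rw [hsplit]
        linarith
    -- the normalized v supports W
    set P := ‖v‖⁻¹ • v with hPdef
    have hP1 : ‖P‖ = 1 := by
      rw [hPdef, norm_smul, Real.norm_eq_abs, abs_of_nonneg (inv_nonneg.mpr hnv.le),
        inv_mul_cancel₀ hnv.ne']
    have hPsupp : ∀ u ∈ W, 0 ≤ ⟪P, u⟫ := fun u hu => by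
      rw [hPdef, real_inner_smul_left]
      exact mul_nonneg (inv_nonneg.mpr hnv.le) (hvCs u hu)
    have hPS : Supports W P := supports_of_touch hsub hP1 hws
      (by rw [hPdef, real_inner_smul_left, hm, mul_zero]) hPsupp
    obtain ⟨Q, hQS, hPQ⟩ := exists_orth_support hsub hCW hPS
    -- now v - (ε/2) Q is in the cone but has negative product with Q
    have hQv : (⟪Q, v⟫ : ℝ) = 0 := by
      have h5 : v = ‖v‖ • P := by rw [hPdef, smul_inv_smul₀ hnv.ne']
      rw [h5, real_inner_smul_right, real_inner_comm, hPQ, mul_zero]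
    have hmem : v - (ε/2) • Q ∈ cone W := by
      apply interior_subset; apply hball
      rw [Metric.mem_ball, dist_eq_norm]
      have h6 : v - (ε/2) • Q - v = -((ε/2) • Q) := by abel
      rw [h6, norm_neg, norm_smul, hQS.1, mul_one, Real.norm_eq_abs,
        abs_of_nonneg (by linarith)]
      linarith
    obtain ⟨r, hr, w, hw, heq⟩ := hmem
    have h7 : (⟪Q, v - (ε/2) • Q⟫ : ℝ) = -(ε/2) := by
      rw [inner_sub_right, hQv, real_inner_smul_right, inner_self_unit hQS.1]
      ring
    have h8 : 0 ≤ (⟪Q, v - (ε/2) • Q⟫ : ℝ) := by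
      rw [heq, real_inner_smul_right]
      exact mul_nonneg hr ((hQS.2.1 hw).2)
    rw [h7] at h8
    linarith

end SelfPolarAux

namespace SelfPolarAux

variable {n : ℕ}

lemma W_subset_polar {W : Set (E n)} (hcl : IsClosed W) (hsub : W ⊆ sph n)
    (harc : ∀ P ∈ W, ∀ Q ∈ W, arc P Q ⊆ W) {R : E n}
    (hRW : ∀ w ∈ W, ⟪R, w⟫ < 0) (hint : (sphInterior W).Nonempty)
    (hCW : ConstWidth W (π / 2)) : W ⊆ polar W := by
  have hne : W.Nonempty := by
    obtain ⟨z, hzW, _⟩ := hint; exact ⟨z, hzW⟩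
  have hz₀ : -R ∈ interior (dcone W) := neg_R_interior hcl hsub hRW hne
  have hCC : cone W ⊆ dcone W := by
    intro c hc
    by_contra hcCs
    set T := {t : ℝ | t ∈ Set.Icc (0:ℝ) 1 ∧ (-R) + t • (c + R) ∈ dcone W} with hTdef
    have hTeq : T = Set.Icc (0:ℝ) 1 ∩ ((fun t : ℝ => (-R) + t • (c + R)) ⁻¹' (dcone W)) := by
      ext t; simp [hTdef]
    have hTcomp : IsCompact T := by
      rw [hTeq]
      exact isCompact_Icc.inter_right (dcone_closed.preimage
        (continuous_const.add (continuous_id.smul continuous_const)))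
    have hTne : T.Nonempty := by
      refine ⟨0, ⟨le_refl 0, zero_le_one⟩, ?_⟩
      simpa using interior_subset hz₀
    have htm := hTcomp.sSup_mem hTne
    set ts := sSup T with htsdef
    obtain ⟨⟨hts0, hts1⟩, hbCs⟩ := htm
    set b := (-R) + ts • (c + R) with hbdef
    have htlt : ts < 1 := by
      rcases lt_or_eq_of_le hts1 with h | h
      · exact h
      · exfalso
        apply hcCs
        have : b = c := by rw [hbdef, h]; rw [one_smul]; abel
        rwa [this] at hbCs
    have hbnint : b ∉ interior (dcone W) := by
      intro hbint
      obtain ⟨ε, hε, hball⟩ := Metric.isOpen_iff.mp isOpen_interior b hbint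
      set δ := min (1 - ts) (ε / (2 * (‖c + R‖ + 1))) with hδdef
      have hδ0 : 0 < δ := lt_min (by linarith) (by positivity)
      have hδ1 : δ ≤ 1 - ts := min_le_left _ _
      have hδ2 : δ ≤ ε / (2 * (‖c + R‖ + 1)) := min_le_right _ _
      have hmem : (-R) + (ts + δ) • (c + R) ∈ dcone W := by
        apply interior_subset
        apply hball
        rw [Metric.mem_ball, dist_eq_norm]
        have heq : (-R) + (ts + δ) • (c + R) - b = δ • (c + R) := by
          rw [hbdef, add_smul]; abel
        rw [heq, norm_smul, Real.norm_eq_abs, abs_of_nonneg hδ0.le]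
        have h1 : δ * ‖c + R‖ ≤ ε / (2 * (‖c + R‖ + 1)) * ‖c + R‖ := by
          apply mul_le_mul_of_nonneg_right hδ2 (norm_nonneg _)
        have h2 : ε / (2 * (‖c + R‖ + 1)) * ‖c + R‖ < ε := by
          rw [div_mul_eq_mul_div, div_lt_iff₀ (by positivity)]
          nlinarith [norm_nonneg (c + R)]
        linarith
      have hTmem : ts + δ ∈ T := ⟨⟨by linarith, by linarith⟩, hmem⟩
      have := le_csSup hTcomp.bddAbove hTmem
      linarith
    have hbfront : b ∈ frontier (dcone W) := by
      rw [dcone_closed.frontier_eq]; exact ⟨hbCs, hbnint⟩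
    have hbni := frontier_dcone_not_interior hcl hsub harc hRW hint hCW b hbfront
    apply hbni
    have hz₀c : -R ∈ interior (cone W) :=
      interior_mono (dcone_subset_cone hcl hsub harc hRW hint hCW) hz₀
    rcases eq_or_lt_of_le hts0 with h0 | h0
    · have : b = -R := by rw [hbdef, ← h0, zero_smul, add_zero]
      rwa [this]
    · have hseg : b ∈ openSegment ℝ (-R) c := by
        refine ⟨1 - ts, ts, by linarith, h0, by ring, ?_⟩
        rw [hbdef]
        module
      exact (cone_convex harc hRW).openSegment_interior_closure_subset_interior
        hz₀c (subset_closure hc) hseg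
  intro w0 hw0
  refine ⟨hsub hw0, fun Pp hPp => ?_⟩
  have h := hCC (mem_cone_self hw0) Pp hPp
  rwa [real_inner_comm] at h

/-- The easy direction : self-polar implies constant width π/2. -/
lemma cw_of_polar {W : Set (E n)} (hcl : IsClosed W) (hsub : W ⊆ sph n)
    (hpolar : W = polar W) : ConstWidth W (π / 2) := by
  intro P hP
  obtain ⟨hPs, hPsub, X, hXf, hXs, hXorth⟩ := hP
  have hP1 : ‖P‖ = 1 := hPs
  have hXW : X ∈ W := by
    have h := hXf.1
    rwa [hcl.closure_eq] at h
  have hPW : P ∈ W := by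
    rw [hpolar]
    exact ⟨hP1, fun w hw => by
      have := (hPsub hw).2; rwa [real_inner_comm] at this⟩
  have hXsupp : ∀ u ∈ W, 0 ≤ ⟪X, u⟫ := by
    intro u hu
    have hX' : X ∈ polar W := hpolar ▸ hXW
    have := hX'.2 u hu
    rwa [real_inner_comm] at this
  have hSX : Supports W X := by
    refine ⟨hXs, fun u hu => ⟨hsub hu, hXsupp u hu⟩, ⟨P, ?_, hP1, ?_⟩⟩
    · exact frontier_of_touch hXs hP1 (by rw [real_inner_comm]; exact hXorth) hPW hXsupp
    · rw [real_inner_comm]; exact hXorth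
  have hbdd : BddBelow {d | ∃ Q', Supports W Q' ∧ d = π - gdist P Q'} := by
    refine ⟨0, ?_⟩
    rintro d ⟨Q', _, rfl⟩
    have := Real.arccos_le_pi (⟪P, Q'⟫ : ℝ)
    unfold gdist; linarith
  unfold widthAt
  apply le_antisymm
  · have hmem : π - gdist P X ∈ {d | ∃ Q', Supports W Q' ∧ d = π - gdist P Q'} :=
      ⟨X, hSX, rfl⟩
    have h2 : gdist P X = π / 2 := by
      unfold gdist
      rw [hXorth, Real.arccos_zero]
    have := csInf_le hbdd hmem
    rw [h2] at this
    linarith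
  · apply le_csInf (s := {d | ∃ Q', Supports W Q' ∧ d = π - gdist P Q'})
      ⟨π - gdist P P, ⟨P, ⟨hPs, hPsub, X, hXf, hXs, hXorth⟩, rfl⟩⟩
    rintro d ⟨Q, hQ, rfl⟩
    have hQW : Q ∈ W := by
      rw [hpolar]
      exact ⟨hQ.1, fun w hw => by
        have := (hQ.2.1 hw).2; rwa [real_inner_comm] at this⟩
    have hPQ : 0 ≤ ⟪P, Q⟫ := by
      have hQ' : Q ∈ polar W := hpolar ▸ hQW
      exact hQ'.2 P hPW
    have := Real.arccos_le_pi_div_two.mpr hPQ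
    unfold gdist
    linarith

end SelfPolarAux

theorem self_polar_iff_constant_width {n : ℕ} (W : Set (E n))
    (hW : SphConvexBody W) :
    W = polar W ↔ ConstWidth W (π / 2) := by
  obtain ⟨hcl, hhem, hconv, hint⟩ := hW
  obtain ⟨hsub, harc⟩ := hconv
  obtain ⟨R, hRs, hRdisj⟩ := hhem
  have hRW : ∀ w ∈ W, ⟪R, w⟫ < 0 := by
    intro w hw
    by_contra h
    push_neg at h
    have hmem : w ∈ W ∩ hemi R := ⟨hw, hsub hw, h⟩
    rw [hRdisj] at hmem
    simpa using hmem
  constructor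
  · exact fun hpolar => SelfPolarAux.cw_of_polar hcl hsub hpolar
  · intro hCW
    exact Set.Subset.antisymm
      (SelfPolarAux.W_subset_polar hcl hsub harc hRW hint hCW)
      (SelfPolarAux.polar_subset_W hcl hsub harc hRW hint hCW)
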